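/- KdV equation from Baker's relation (H-1) (equation (4-30) in the proof of Lemma 4-8): Let U ⊆ ℂ² be open, σ : U → ℂ holomorphic and nowhere vanishing, and define ℘_{jk} := −∂_j ∂_k log σ for j,k ∈ {1,2}, where ∂_j = ∂/∂u_j. Let λ₃, λ₄ ∈ ℂ be constants and suppose Baker's relation (H-1) holds on U: ∂₂² ℘₂₂ − 6 ℘₂₂² = 2λ₃ + 4λ₄ ℘₂₂ + 4 ℘₂₁ (the case λ₅ = 1). Set a₂ := −λ₄/3. Then q := −2℘₂₂ − λ₄ − a₂ satisfies the KdV-type equation −4 ∂₁ q + 6 q ∂₂ q + ∂₂³ q = 0 on U. -/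

import Mathlib

open Complex

noncomputable section

/-- Partial derivative in the first complex variable `u₁`. -/
def pd1 (f : ℂ × ℂ → ℂ) (u : ℂ × ℂ) : ℂ := deriv (fun z => f (z, u.2)) u.1

/-- Partial derivative in the second complex variable `u₂`. -/
def pd2 (f : ℂ × ℂ → ℂ) (u : ℂ × ℂ) : ℂ := deriv (fun z => f (u.1, z)) u.2

/-- Baker's `℘₂₂ = −∂₂ ∂₂ log σ = −∂₂(∂₂σ/σ)`. -/
def bakerP22 (σ : ℂ × ℂ → ℂ) : ℂ × ℂ → ℂ :=
  fun u => -(pd2 (fun v => pd2 σ v / σ v) u)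

/-- Baker's `℘₂₁ = −∂₂ ∂₁ log σ = −∂₂(∂₁σ/σ)`. -/
def bakerP21 (σ : ℂ × ℂ → ℂ) : ℂ × ℂ → ℂ :=
  fun u => -(pd2 (fun v => pd1 σ v / σ v) u)

open Filter Topology

variable {f g : ℂ × ℂ → ℂ} {u : ℂ × ℂ}

lemma fderiv_slice1 (hf : DifferentiableAt ℂ f u) :
    HasDerivAt (fun z => f (z, u.2)) (fderiv ℂ f u (1, 0)) u.1 := by
  have h1 : HasDerivAt (fun z : ℂ => (z, u.2)) ((1 : ℂ), (0 : ℂ)) u.1 :=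
    (hasDerivAt_id u.1).prodMk (hasDerivAt_const u.1 u.2)
  have h2 : HasFDerivAt f (fderiv ℂ f u) ((u.1, u.2)) := by
    simpa using hf.hasFDerivAt
  exact h2.comp_hasDerivAt u.1 h1

lemma fderiv_slice2 (hf : DifferentiableAt ℂ f u) :
    HasDerivAt (fun z => f (u.1, z)) (fderiv ℂ f u (0, 1)) u.2 := by
  have h1 : HasDerivAt (fun z : ℂ => (u.1, z)) ((0 : ℂ), (1 : ℂ)) u.2 :=
    (hasDerivAt_const u.2 u.1).prodMk (hasDerivAt_id u.2)
  have h2 : HasFDerivAt f (fderiv ℂ f u) ((u.1, u.2)) := by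
    simpa using hf.hasFDerivAt
  exact h2.comp_hasDerivAt u.2 h1

lemma pd1_eq_fderiv (hf : DifferentiableAt ℂ f u) :
    pd1 f u = fderiv ℂ f u (1, 0) := (fderiv_slice1 hf).deriv

lemma pd2_eq_fderiv (hf : DifferentiableAt ℂ f u) :
    pd2 f u = fderiv ℂ f u (0, 1) := (fderiv_slice2 hf).deriv

lemma hasDerivAt_slice1 (hf : DifferentiableAt ℂ f u) :
    HasDerivAt (fun z => f (z, u.2)) (pd1 f u) u.1 := by
  rw [pd1_eq_fderiv hf]; exact fderiv_slice1 hf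

lemma hasDerivAt_slice2 (hf : DifferentiableAt ℂ f u) :
    HasDerivAt (fun z => f (u.1, z)) (pd2 f u) u.2 := by
  rw [pd2_eq_fderiv hf]; exact fderiv_slice2 hf

lemma pd1_congr_nhds (h : f =ᶠ[𝓝 u] g) : pd1 f u = pd1 g u := by
  apply Filter.EventuallyEq.deriv_eq
  have hc : Tendsto (fun z : ℂ => (z, u.2)) (𝓝 u.1) (𝓝 u) := by
    have : ContinuousAt (fun z : ℂ => (z, u.2)) u.1 := by fun_prop
    exact this
  exact h.comp_tendsto hc

lemma pd2_congr_nhds (h : f =ᶠ[𝓝 u] g) : pd2 f u = pd2 g u := by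
  apply Filter.EventuallyEq.deriv_eq
  have hc : Tendsto (fun z : ℂ => (u.1, z)) (𝓝 u.2) (𝓝 u) := by
    have : ContinuousAt (fun z : ℂ => (u.1, z)) u.2 := by fun_prop
    exact this
  exact h.comp_tendsto hc

lemma AnalyticAt.pd1' (hf : AnalyticAt ℂ f u) : AnalyticAt ℂ (pd1 f) u := by
  have h1 : AnalyticAt ℂ (fun v => fderiv ℂ f v (1, 0)) u :=
    ((ContinuousLinearMap.apply ℂ ℂ ((1 : ℂ), (0 : ℂ))).analyticAt _).comp hf.fderiv
  apply h1.congr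
  filter_upwards [hf.eventually_analyticAt] with v hv
  exact (pd1_eq_fderiv hv.differentiableAt).symm

lemma AnalyticAt.pd2' (hf : AnalyticAt ℂ f u) : AnalyticAt ℂ (pd2 f) u := by
  have h1 : AnalyticAt ℂ (fun v => fderiv ℂ f v (0, 1)) u :=
    ((ContinuousLinearMap.apply ℂ ℂ ((0 : ℂ), (1 : ℂ))).analyticAt _).comp hf.fderiv
  apply h1.congr
  filter_upwards [hf.eventually_analyticAt] with v hv
  exact (pd2_eq_fderiv hv.differentiableAt).symm

lemma pd_comm (hf : AnalyticAt ℂ f u) : pd1 (pd2 f) u = pd2 (pd1 f) u := by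
  have hev := hf.eventually_analyticAt
  have h2 : pd2 f =ᶠ[𝓝 u] fun v => fderiv ℂ f v (0, 1) := by
    filter_upwards [hev] with v hv; exact pd2_eq_fderiv hv.differentiableAt
  have h1 : pd1 f =ᶠ[𝓝 u] fun v => fderiv ℂ f v (1, 0) := by
    filter_upwards [hev] with v hv; exact pd1_eq_fderiv hv.differentiableAt
  rw [pd1_congr_nhds h2, pd2_congr_nhds h1]
  have hfd : AnalyticAt ℂ (fderiv ℂ f) u := hf.fderiv
  have hd : DifferentiableAt ℂ (fderiv ℂ f) u := hfd.differentiableAt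
  have key : ∀ c : ℂ × ℂ, DifferentiableAt ℂ (fun v => fderiv ℂ f v c) u ∧
      fderiv ℂ (fun v => fderiv ℂ f v c) u = ((fderiv ℂ (fderiv ℂ f) u).flip c) := by
    intro c
    have h := hd.hasFDerivAt.clm_apply (hasFDerivAt_const c u)
    simp only [fderiv_const, Pi.zero_apply, ContinuousLinearMap.comp_zero, zero_add] at h
    exact ⟨h.differentiableAt, h.fderiv⟩
  rw [pd1_eq_fderiv (key _).1, pd2_eq_fderiv (key _).1, (key _).2, (key _).2]
  have hsymm : ∀ v w : ℂ × ℂ,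
      fderiv ℂ (fderiv ℂ f) u v w = fderiv ℂ (fderiv ℂ f) u w v := by
    intro v w
    apply second_derivative_symmetric_of_eventually (f := f) (x := u)
    · filter_upwards [hev] with y hy; exact hy.differentiableAt.hasFDerivAt
    · exact hd.hasFDerivAt
  simpa using hsymm (1, 0) (0, 1)

lemma pd1_neg : pd1 (fun v => -(f v)) u = -(pd1 f u) := by
  simp only [pd1]; exact deriv.neg

lemma pd2_neg : pd2 (fun v => -(f v)) u = -(pd2 f u) := by
  simp only [pd2]; exact deriv.neg

lemma pd1_affine (c1 c2 : ℂ) :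
    pd1 (fun v => -2 * f v - c1 - c2) u = -2 * pd1 f u := by
  simp only [pd1]
  rw [deriv_sub_const, deriv_sub_const, deriv_const_mul_field]

lemma pd2_affine (c1 c2 : ℂ) :
    pd2 (fun v => -2 * f v - c1 - c2) u = -2 * pd2 f u := by
  simp only [pd2]
  rw [deriv_sub_const, deriv_sub_const, deriv_const_mul_field]

lemma pd2_constmul (c : ℂ) : pd2 (fun v => c * f v) u = c * pd2 f u := by
  simp only [pd2]; exact deriv_const_mul_field c

lemma pd1_div (hf : DifferentiableAt ℂ f u) (hg : DifferentiableAt ℂ g u) (h0 : g u ≠ 0) :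
    pd1 (fun v => f v / g v) u = (pd1 f u * g u - f u * pd1 g u) / g u ^ 2 :=
  ((hasDerivAt_slice1 hf).div (hasDerivAt_slice1 hg) h0).deriv

lemma pd2_div (hf : DifferentiableAt ℂ f u) (hg : DifferentiableAt ℂ g u) (h0 : g u ≠ 0) :
    pd2 (fun v => f v / g v) u = (pd2 f u * g u - f u * pd2 g u) / g u ^ 2 :=
  ((hasDerivAt_slice2 hf).div (hasDerivAt_slice2 hg) h0).deriv

/-- **KdV equation from Baker's relation (H-1) (equation (4-30)).**
Let `σ` be holomorphic and nowhere vanishing on an open `U ⊆ ℂ²`, let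
`℘_{jk} = −∂_j ∂_k log σ`, and suppose Baker's relation (H-1)
`∂₂²℘₂₂ − 6℘₂₂² = 2λ₃ + 4λ₄℘₂₂ + 4℘₂₁` holds on `U` (the case `λ₅ = 1`).
With `a₂ = −λ₄/3`, the function `q = −2℘₂₂ − λ₄ − a₂` satisfies the KdV-type
equation `−4 ∂₁ q + 6 q ∂₂ q + ∂₂³ q = 0` on `U`. -/
theorem kdv_from_baker_H1 (U : Set (ℂ × ℂ)) (hUopen : IsOpen U)
    (σ : ℂ × ℂ → ℂ) (hσ : AnalyticOnNhd ℂ σ U) (hσne : ∀ u ∈ U, σ u ≠ 0)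
    (lam₃ lam₄ : ℂ)
    (hH1 : ∀ u ∈ U,
      pd2 (pd2 (bakerP22 σ)) u - 6 * (bakerP22 σ u) ^ 2 =
        2 * lam₃ + 4 * lam₄ * bakerP22 σ u + 4 * bakerP21 σ u)
    (a₂ : ℂ) (ha₂ : a₂ = -lam₄ / 3)
    (q : ℂ × ℂ → ℂ) (hq : q = fun u => -2 * bakerP22 σ u - lam₄ - a₂) :
    ∀ u ∈ U,
      -4 * pd1 q u + 6 * q u * pd2 q u + pd2 (pd2 (pd2 q)) u = 0 := by
  subst hq ha₂
  intro u hu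
  have hg2a : ∀ v ∈ U, AnalyticAt ℂ (fun w => pd2 σ w / σ w) v := fun v hv =>
    ((hσ v hv).pd2').div (hσ v hv) (hσne v hv)
  have hg1a : ∀ v ∈ U, AnalyticAt ℂ (fun w => pd1 σ w / σ w) v := fun v hv =>
    ((hσ v hv).pd1').div (hσ v hv) (hσne v hv)
  have hPa : ∀ v ∈ U, AnalyticAt ℂ (bakerP22 σ) v := fun v hv =>
    ((hg2a v hv).pd2').neg
  have hRa : ∀ v ∈ U, AnalyticAt ℂ (bakerP21 σ) v := fun v hv =>
    ((hg1a v hv).pd2').neg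
  -- mixed partials: pd2 ℘₂₁ = pd1 ℘₂₂ at u
  have hmix : pd2 (bakerP21 σ) u = pd1 (bakerP22 σ) u := by
    have hevσ : ∀ᶠ v in 𝓝 u, AnalyticAt ℂ σ v := (hσ u hu).eventually_analyticAt
    have hevne : ∀ᶠ v in 𝓝 u, σ v ≠ 0 :=
      (hσ u hu).continuousAt.eventually_ne (hσne u hu)
    have key : pd1 (fun w => pd2 σ w / σ w) =ᶠ[𝓝 u] pd2 (fun w => pd1 σ w / σ w) := by
      filter_upwards [hevσ, hevne] with v hv hvne
      have h2 : DifferentiableAt ℂ (pd2 σ) v := hv.pd2'.differentiableAt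
      have h1 : DifferentiableAt ℂ (pd1 σ) v := hv.pd1'.differentiableAt
      have hσd : DifferentiableAt ℂ σ v := hv.differentiableAt
      rw [pd1_div h2 hσd hvne, pd2_div h1 hσd hvne, pd_comm hv]
      ring
    have e1 : pd2 (bakerP21 σ) u = -(pd2 (pd2 (fun w => pd1 σ w / σ w)) u) := by
      unfold bakerP21; exact pd2_neg
    have e2 : pd1 (bakerP22 σ) u = -(pd1 (pd2 (fun w => pd2 σ w / σ w)) u) := by
      unfold bakerP22; exact pd1_neg
    rw [e1, e2, pd_comm (hg2a u hu), pd2_congr_nhds key]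
  -- derivative of Baker's relation in u₂
  have hdiff : pd2 (pd2 (pd2 (bakerP22 σ))) u =
      12 * bakerP22 σ u * pd2 (bakerP22 σ) u + 4 * lam₄ * pd2 (bakerP22 σ) u +
        4 * pd2 (bakerP21 σ) u := by
    have heq : pd2 (pd2 (bakerP22 σ)) =ᶠ[𝓝 u]
        fun v => 6 * (bakerP22 σ v) ^ 2 +
          (2 * lam₃ + 4 * lam₄ * bakerP22 σ v + 4 * bakerP21 σ v) := by
      filter_upwards [hUopen.mem_nhds hu] with v hv
      linear_combination hH1 v hv
    rw [pd2_congr_nhds heq]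
    have hp : HasDerivAt (fun z => bakerP22 σ (u.1, z)) (pd2 (bakerP22 σ) u) u.2 :=
      hasDerivAt_slice2 (hPa u hu).differentiableAt
    have hr : HasDerivAt (fun z => bakerP21 σ (u.1, z)) (pd2 (bakerP21 σ) u) u.2 :=
      hasDerivAt_slice2 (hRa u hu).differentiableAt
    have H : HasDerivAt
        (fun z => 6 * (bakerP22 σ (u.1, z)) ^ 2 +
          (2 * lam₃ + 4 * lam₄ * bakerP22 σ (u.1, z) + 4 * bakerP21 σ (u.1, z)))
        (6 * (2 * bakerP22 σ (u.1, u.2) ^ 1 * pd2 (bakerP22 σ) u) +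
          (4 * lam₄ * pd2 (bakerP22 σ) u + 4 * pd2 (bakerP21 σ) u)) u.2 :=
      ((hp.pow 2).const_mul 6).add
        (((hp.const_mul (4 * lam₄)).const_add (2 * lam₃)).add (hr.const_mul 4))
    have := H.deriv
    simp only [pd2] at this ⊢
    rw [this]
    simp only [Prod.mk.eta, pow_one]
    ring
  -- q-derivatives
  have hq1 : pd1 (fun v => -2 * bakerP22 σ v - lam₄ - (-lam₄ / 3)) u =
      -2 * pd1 (bakerP22 σ) u := pd1_affine _ _
  have hq2 : pd2 (fun v => -2 * bakerP22 σ v - lam₄ - (-lam₄ / 3)) =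
      fun v => -2 * pd2 (bakerP22 σ) v := funext fun v => pd2_affine _ _
  have hq22 : pd2 (fun v => -2 * pd2 (bakerP22 σ) v) =
      fun v => -2 * pd2 (pd2 (bakerP22 σ)) v := funext fun v => pd2_constmul _
  have hq222 : pd2 (fun v => -2 * pd2 (pd2 (bakerP22 σ)) v) u =
      -2 * pd2 (pd2 (pd2 (bakerP22 σ))) u := pd2_constmul _
  rw [hq1, hq2, hq22, hq222, hdiff, hmix]
  ring
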